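/- The constant c = (1/Q_∞) ∑_{m≥0} a_{m+1} b_m (the asymptotic proportion of 2-protected nodes in random digital search trees) satisfies 0.30707 < c < 0.30708. -/

import Mathlib

open Finset

/-- `Q m = ∏_{k=1}^m (1 - 2^{-k})`, with `Q 0 = 1`. -/
noncomputable def Q (m : ℕ) : ℝ := ∏ k ∈ Finset.Icc 1 m, (1 - (2:ℝ) ^ (-(k:ℤ)))

/-- `Q_∞ = ∏_{k≥1} (1 - 2^{-k})`. -/
noncomputable def Qinf : ℝ := ∏' k : ℕ, (1 - (2:ℝ) ^ (-((k:ℤ)+1)))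

/-- `aCoef m = a_{m+1} = (-1)^m 2^{-binom(m+1,2)} / Q_m`. -/
noncomputable def aCoef (m : ℕ) : ℝ :=
  (-1)^m * (2:ℝ) ^ (-((m+1).choose 2 : ℤ)) / Q m

/-- `L = log 2`. -/
noncomputable def Lc : ℝ := Real.log 2

/-- The polynomial-logarithmic function `B` appearing in the residue computation. -/
noncomputable def B (x : ℝ) : ℝ :=
  16*Lc - 48*x*Lc + 48*x^2*Lc - 16*x^3*Lc - 20 + 60*x - 69*x^2 + 36*x^3 - 7*x^4
    - 8*x*Real.log x + 12*x^2*Real.log x - 10*x^3*Real.log x + 4*x^4*Real.log x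

/-- `b_0 = 37/(12L) - 4` and, for `m ≥ 1`,
`b_m = (1/(4L)) B(2^{-m}) / ((2^{-m}-1)³ (2^{-m}-2)²)`. -/
noncomputable def b (m : ℕ) : ℝ :=
  if m = 0 then 37 / (12 * Lc) - 4
  else (1 / (4 * Lc)) * B ((2:ℝ) ^ (-(m:ℤ)))
    / (((2:ℝ) ^ (-(m:ℤ)) - 1)^3 * ((2:ℝ) ^ (-(m:ℤ)) - 2)^2)


lemma Lpos : 0 < Lc := Real.log_pos (by norm_num)

lemma term0 : aCoef 0 * b 0 = (-4) + ((37:ℝ)/12)/Real.log 2 := by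
  have hL := Lpos
  have hQ : Q 0 = 1 := by rw [Q, show Finset.Icc 1 0 = ∅ from rfl, Finset.prod_empty]
  rw [aCoef, b, hQ]
  simp only [Lc, if_pos rfl, show Nat.choose (0+1) 2 = 0 from rfl]
  norm_num
  field_simp
  ring

lemma term1 : aCoef 1 * b 1 = ((32:ℝ)/9) + ((-17:ℝ)/6)/Real.log 2 := by
  have hL := Lpos
  have hQ : Q 1 = (1:ℝ)/2 := by
    rw [Q, show Finset.Icc 1 1 = {1} from rfl]
    norm_num [Finset.prod_insert]
  rw [aCoef, b, hQ]
  simp only [B, Real.log_zpow, show Nat.choose (1+1) 2 = 1 from rfl, Lc]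
  norm_num
  field_simp
  ring

lemma term2 : aCoef 2 * b 2 = ((-2440:ℝ)/3969) + ((107:ℝ)/189)/Real.log 2 := by
  have hL := Lpos
  have hQ : Q 2 = (3:ℝ)/8 := by
    rw [Q, show Finset.Icc 1 2 = {1,2} from rfl]
    norm_num [Finset.prod_insert]
  rw [aCoef, b, hQ]
  simp only [B, Real.log_zpow, show Nat.choose (2+1) 2 = 3 from rfl, Lc]
  norm_num
  field_simp
  ring

lemma term3 : aCoef 3 * b 3 = ((108232:ℝ)/1620675) + ((-1054:ℝ)/15435)/Real.log 2 := by
  have hL := Lpos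
  have hQ : Q 3 = (21:ℝ)/64 := by
    rw [Q, show Finset.Icc 1 3 = {1,2,3} from rfl]
    norm_num [Finset.prod_insert]
  rw [aCoef, b, hQ]
  simp only [B, Real.log_zpow, show Nat.choose (3+1) 2 = 6 from rfl, Lc]
  norm_num
  field_simp
  ring

lemma term4 : aCoef 4 * b 4 = ((-3933632:ℝ)/1021663125) + ((9308:ℝ)/2197125)/Real.log 2 := by
  have hL := Lpos
  have hQ : Q 4 = (315:ℝ)/1024 := by
    rw [Q, show Finset.Icc 1 4 = {1,2,3,4} from rfl]
    norm_num [Finset.prod_insert]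
  rw [aCoef, b, hQ]
  simp only [B, Real.log_zpow, show Nat.choose (4+1) 2 = 10 from rfl, Lc]
  norm_num
  field_simp
  ring

lemma term5 : aCoef 5 * b 5 = ((44010272:ℝ)/384872759145) + ((-78136:ℝ)/591202395)/Real.log 2 := by
  have hL := Lpos
  have hQ : Q 5 = (9765:ℝ)/32768 := by
    rw [Q, show Finset.Icc 1 5 = {1,2,3,4,5} from rfl]
    norm_num [Finset.prod_insert]
  rw [aCoef, b, hQ]
  simp only [B, Real.log_zpow, show Nat.choose (5+1) 2 = 15 from rfl, Lc]
  norm_num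
  field_simp
  ring

lemma term6 : aCoef 6 * b 6 = ((-1431146368:ℝ)/827028798439095) + ((640112:ℝ)/310097037285)/Real.log 2 := by
  have hL := Lpos
  have hQ : Q 6 = (615195:ℝ)/2097152 := by
    rw [Q, show Finset.Icc 1 6 = {1,2,3,4,5,6} from rfl]
    norm_num [Finset.prod_insert]
  rw [aCoef, b, hQ]
  simp only [B, Real.log_zpow, show Nat.choose (6+1) 2 = 21 from rfl, Lc]
  norm_num
  field_simp
  ring

lemma term7 : aCoef 7 * b 7 = ((137957170304:ℝ)/10406580349360174875) + ((-5181664:ℝ)/321339519819675)/Real.log 2 := by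
  have hL := Lpos
  have hQ : Q 7 = (78129765:ℝ)/268435456 := by
    rw [Q, show Finset.Icc 1 7 = {1,2,3,4,5,6,7} from rfl]
    norm_num [Finset.prod_insert]
  rw [aCoef, b, hQ]
  simp only [B, Real.log_zpow, show Nat.choose (7+1) 2 = 28 from rfl, Lc]
  norm_num
  field_simp
  ring

lemma term8 : aCoef 8 * b 8 = ((-4415026100224:ℝ)/86261904047254940353125) + ((1345088:ℝ)/21354837236026875)/Real.log 2 := by
  have hL := Lpos
  have hQ : Q 8 = (19923090075:ℝ)/68719476736 := by
    rw [Q, show Finset.Icc 1 8 = {1,2,3,4,5,6,7,8} from rfl]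
    norm_num [Finset.prod_insert]
  rw [aCoef, b, hQ]
  simp only [B, Real.log_zpow, show Nat.choose (8+1) 2 = 36 from rfl, Lc]
  norm_num
  field_simp
  ring

lemma term9 : aCoef 9 * b 9 = ((28229559358976:ℝ)/284329264814777347691938335) + ((-19680128:ℝ)/159972787066334301675)/Real.log 2 := by
  have hL := Lpos
  have hQ : Q 9 = (10180699028325:ℝ)/35184372088832 := by
    rw [Q, show Finset.Icc 1 9 = {1,2,3,4,5,6,7,8,9} from rfl]
    norm_num [Finset.prod_insert]
  rw [aCoef, b, hQ]
  simp only [B, Real.log_zpow, show Nat.choose (9+1) 2 = 45 from rfl, Lc]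
  norm_num
  field_simp
  ring


lemma Qsucc (m : ℕ) : Q (m+1) = Q m * (1 - (2:ℝ) ^ (-(m+1:ℤ))) := by
  rw [Q, Q, Finset.prod_Icc_succ_top (Nat.le_add_left 1 m)]
  push_cast; ring_nf

set_option maxHeartbeats 8000000 in
lemma Q25_bounds : (0.2887881036:ℝ) ≤ Q 25 ∧ Q 25 ≤ 0.2887881037 := by
  have e0 : Q 0 = 1 := by rw [Q, show Finset.Icc 1 0 = ∅ from rfl, Finset.prod_empty]
  have e1 : Q 1 = (1:ℝ)/2 := by have h := Qsucc 0; norm_num [e0] at h; linarith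
  have e2 : Q 2 = (3:ℝ)/8 := by have h := Qsucc 1; norm_num [e1] at h; linarith
  have e3 : Q 3 = (21:ℝ)/64 := by have h := Qsucc 2; norm_num [e2] at h; linarith
  have e4 : Q 4 = (315:ℝ)/1024 := by have h := Qsucc 3; norm_num [e3] at h; linarith
  have e5 : Q 5 = (9765:ℝ)/32768 := by have h := Qsucc 4; norm_num [e4] at h; linarith
  have e6 : Q 6 = (615195:ℝ)/2097152 := by have h := Qsucc 5; norm_num [e5] at h; linarith
  have e7 : Q 7 = (78129765:ℝ)/268435456 := by have h := Qsucc 6; norm_num [e6] at h; linarith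
  have e8 : Q 8 = (19923090075:ℝ)/68719476736 := by have h := Qsucc 7; norm_num [e7] at h; linarith
  have e9 : Q 9 = (10180699028325:ℝ)/35184372088832 := by have h := Qsucc 8; norm_num [e8] at h; linarith
  have e10 : Q 10 = (10414855105976475:ℝ)/36028797018963968 := by have h := Qsucc 9; norm_num [e9] at h; linarith
  have e11 : Q 11 = (21319208401933844325:ℝ)/73786976294838206464 := by have h := Qsucc 10; norm_num [e10] at h; linarith
  have e12 : Q 12 = (87302158405919092510875:ℝ)/302231454903657293676544 := by have h := Qsucc 11; norm_num [e11] at h; linarith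
  have e13 : Q 13 = (715091979502883286756577125:ℝ)/2475880078570760549798248448 := by have h := Qsucc 12; norm_num [e12] at h; linarith
  have e14 : Q 14 = (11715351900195736886933003038875:ℝ)/40564819207303340847894502572032 := by have h := Qsucc 13; norm_num [e13] at h; linarith
  have e15 : Q 15 = (383876935713713710574133710574817125:ℝ)/1329227995784915872903807060280344576 := by have h := Qsucc 14; norm_num [e14] at h; linarith
  have e16 : Q 16 = (25157374981998228022475852722520640286875:ℝ)/87112285931760246646623899502532662132736 := by have h := Qsucc 15; norm_num [e15] at h; linarith
  have e17 : Q 17 = (3297402296265489745133932492193502843040993125:ℝ)/11417981541647679048466287755595961091061972992 := by have h := Qsucc 16; norm_num [e16] at h; linarith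
  have e18 : Q 18 = (864390930149924278258644465301081415783295060766875:ℝ)/2993155353253689176481146537402947624255349848014848 := by have h := Qsucc 17; norm_num [e17] at h; linarith
  have e19 : Q 19 = (453188927595513350075389930779308072236776417524282593125:ℝ)/1569275433846670190958947355801916604025588861116008628224 := by have h := Qsucc 18; norm_num [e18] at h; linarith
  have e20 : Q 20 = (475202579753465411055301996666912961845677832005524620086046875:ℝ)/1645504557321206042154969182557350504982735865633579863348609024 := by have h := Qsucc 19; norm_num [e19] at h; linarith
  have e21 : Q 21 = (996571565332559740260037637612013184847625111068217962538073289953125:ℝ)/3450873173395281893717377931138512726225554486085193277581262111899648 := by have h := Qsucc 20; norm_num [e20] at h; linarith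
  have e22 : Q 22 = (4179923106189051316251896643548979737245948546228759804927328414270262046875:ℝ)/14474011154664524427946373126085988481658748083205070504932198000989141204992 := by have h := Qsucc 21; norm_num [e21] at h; linarith
  have e23 : Q 23 = (35063732228039219194869873947351476266719524696534398100932021627246420098249953125:ℝ)/121416805764108066932466369176469931665150427440758720078238275608681517825325531136 := by have h := Qsucc 22; norm_num [e22] at h; linarith
  have e24 : Q 24 = (588271774292243008864458772237614397894150810531567351834928227224963047968660587318046875:ℝ)/2037035976334486086268445688409378161051468393665936250636140449354381299763336706183397376 := by have h := Qsucc 23; norm_num [e23] at h; linarith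
  have e25 : Q 25 = (19739124659736641876174870225391747918745828675575550028997822590372344070614111839582878921953125:ℝ)/68351585149469122636640694597425667667286544715412888638305331450311031224980497600734786781970432 := by have h := Qsucc 24; norm_num [e24] at h; linarith
  rw [e25]; norm_num

lemma factor_lb (k : ℕ) (hk : 1 ≤ k) : (1/2:ℝ) ≤ 1 - (2:ℝ) ^ (-(k:ℤ)) := by
  have h : (2:ℝ) ^ (-(k:ℤ)) ≤ (2:ℝ) ^ (-(1:ℤ)) :=
    zpow_le_zpow_right₀ one_le_two (by omega)
  rw [show ((2:ℝ)^(-(1:ℤ))) = 1/2 by norm_num] at h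
  linarith

lemma factor_ub (k : ℕ) : 1 - (2:ℝ) ^ (-(k:ℤ)) < 1 := by
  have : (0:ℝ) < (2:ℝ) ^ (-(k:ℤ)) := by positivity
  linarith

lemma Qpos (m : ℕ) : 0 < Q m := by
  rw [Q]
  apply Finset.prod_pos
  intro k hk
  have : 1 ≤ k := (Finset.mem_Icc.mp hk).1
  have := factor_lb k this
  linarith

lemma Qone : Q 1 = 1/2 := by
  rw [Q, show Finset.Icc 1 1 = {1} from rfl]
  norm_num

lemma Qaux : ∀ m : ℕ, 1 ≤ m → (1/4:ℝ) * (1 + 2 * (2:ℝ)^(-(m:ℤ))) ≤ Q m := by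
  intro m hm
  induction m, hm using Nat.le_induction with
  | base => rw [Qone]; norm_num
  | succ n hn ih =>
      rw [Qsucc n]
      have hs : (0:ℝ) < (2:ℝ)^(-(n+1:ℤ)) := by positivity
      have hs4 : (2:ℝ)^(-(n+1:ℤ)) ≤ 1/4 := by
        have h : (2:ℝ) ^ (-(n+1:ℤ)) ≤ (2:ℝ) ^ (-(2:ℤ)) :=
          zpow_le_zpow_right₀ one_le_two (by omega)
        rw [show ((2:ℝ)^(-(2:ℤ))) = 1/4 by norm_num] at h
        exact h
      have hdb : (2:ℝ)^(-(n:ℤ)) = 2 * (2:ℝ)^(-(n+1:ℤ)) := by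
        rw [show (-(n:ℤ)) = 1 + -(n+1:ℤ) by ring, zpow_add₀ (two_ne_zero)]
        norm_num
      rw [hdb] at ih
      push_cast
      nlinarith [Qpos n]

lemma Qquarter (m : ℕ) : (1/4:ℝ) ≤ Q m := by
  rcases Nat.eq_zero_or_pos m with h | h
  · subst h
    rw [Q, show Finset.Icc 1 0 = ∅ from rfl, Finset.prod_empty]; norm_num
  · have := Qaux m h
    have hs : (0:ℝ) < (2:ℝ)^(-(m:ℤ)) := by positivity
    nlinarith

lemma Llo : (0.6931471803:ℝ) < Lc := Real.log_two_gt_d9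
lemma Lhi : Lc < 0.6931471808 := Real.log_two_lt_d9

set_option maxHeartbeats 2000000 in
lemma b_bound (m : ℕ) : |b m| ≤ 200 := by
  rcases Nat.eq_zero_or_pos m with h | h
  · subst h
    rw [b, if_pos rfl]
    have h1 : (0:ℝ) < 12 * Lc := by nlinarith [Llo]
    rw [abs_le]
    constructor
    · have : (0:ℝ) ≤ 37 / (12 * Lc) := by positivity
      linarith
    · have : 37 / (12 * Lc) ≤ 37 / (12 * 0.6931471803) := by
        apply div_le_div_of_nonneg_left (by norm_num) (by norm_num)
        nlinarith [Llo]
      nlinarith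
  · rw [b, if_neg (by omega)]
    set x : ℝ := (2:ℝ) ^ (-(m:ℤ)) with hxdef
    have hx0 : 0 < x := by positivity
    have hx : x ≤ 1/2 := by
      have h2 : (2:ℝ) ^ (-(m:ℤ)) ≤ (2:ℝ) ^ (-(1:ℤ)) :=
        zpow_le_zpow_right₀ one_le_two (by omega)
      rw [show ((2:ℝ)^(-(1:ℤ))) = 1/2 by norm_num] at h2
      exact h2
    clear_value x
    have hlog : Real.log x ≤ 0 := Real.log_nonpos (le_of_lt hx0) (by linarith)
    have hxlog : -(x * Real.log x) ≤ 1 - x := by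
      have h3 : Real.log x⁻¹ ≤ x⁻¹ - 1 := Real.log_le_sub_one_of_pos (by positivity)
      rw [Real.log_inv] at h3
      have := mul_le_mul_of_nonneg_left h3 (le_of_lt hx0)
      calc -(x * Real.log x) = x * (-Real.log x) := by ring
        _ ≤ x * (x⁻¹ - 1) := this
        _ = 1 - x := by field_simp
    have p1 : 0 ≤ -(x * Real.log x) := by nlinarith [mul_nonneg (le_of_lt hx0) (neg_nonneg.mpr hlog)]
    have p2 : -(x^2 * Real.log x) ≤ x * (1 - x) := by nlinarith [mul_le_mul_of_nonneg_left hxlog (le_of_lt hx0)]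
    have p3 : -(x^3 * Real.log x) ≤ x^2 * (1 - x) := by nlinarith [mul_le_mul_of_nonneg_left hxlog (mul_nonneg hx0.le hx0.le)]
    have p4 : -(x^4 * Real.log x) ≤ x^3 * (1 - x) := by nlinarith [mul_le_mul_of_nonneg_left hxlog (mul_nonneg (mul_nonneg hx0.le hx0.le) hx0.le)]
    have p5 : 0 ≤ -(x^2 * Real.log x) := by nlinarith [mul_nonneg (mul_nonneg hx0.le hx0.le) (neg_nonneg.mpr hlog)]
    have p6 : 0 ≤ -(x^3 * Real.log x) := by nlinarith [mul_nonneg (mul_nonneg (mul_nonneg hx0.le hx0.le) hx0.le) (neg_nonneg.mpr hlog)]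
    have p7 : 0 ≤ -(x^4 * Real.log x) := by nlinarith [mul_nonneg (mul_nonneg (mul_nonneg (mul_nonneg hx0.le hx0.le) hx0.le) hx0.le) (neg_nonneg.mpr hlog)]
    have hBub : B x ≤ 150 := by
      rw [B]; nlinarith [Lhi, Llo, sq_nonneg x, p1, p2, p3, p4, p5, p6, p7, hxlog]
    have hBlb : -150 ≤ B x := by
      rw [B]; nlinarith [Lhi, Llo, sq_nonneg x, p1, p2, p3, p4, p5, p6, p7, hxlog]
    have hBabs : |B x| ≤ 150 := abs_le.mpr ⟨hBlb, hBub⟩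
    have hLpos := Lpos
    set D : ℝ := (x-1)^3 * (x-2)^2 with hDdef
    have hcube : (1/8:ℝ) ≤ (1-x)^3 := by
      calc (1/8:ℝ) = (1/2)^3 := by norm_num
        _ ≤ (1-x)^3 := pow_le_pow_left₀ (by norm_num) (by linarith) 3
    have hsq : (9/4:ℝ) ≤ (x-2)^2 := by
      have h : (3/2:ℝ)^2 ≤ (2-x)^2 := pow_le_pow_left₀ (by norm_num) (by linarith) 2
      calc (9/4:ℝ) = (3/2)^2 := by norm_num
        _ ≤ (2-x)^2 := h
        _ = (x-2)^2 := by ring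
    have hprod : (1/8:ℝ)*(9/4) ≤ (1-x)^3*(x-2)^2 :=
      mul_le_mul hcube hsq (by norm_num) (by linarith)
    have hkey : (x-1)^3*(x-2)^2 = -((1-x)^3*(x-2)^2) := by ring
    have hD : D ≤ -(9/32) := by
      rw [hDdef, hkey]; linarith [hprod]
    have hDneg : D < 0 := by
      rw [hDdef, hkey]; linarith [hprod]
    have heq : (1 / (4 * Lc)) * B x / D = B x / (4*Lc*D) := by
      rw [one_div_mul_eq_div, div_div]
    rw [heq, abs_div]
    clear_value D
    have habsden : (3/4:ℝ) ≤ |4*Lc*D| := by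
      rw [abs_mul, abs_of_pos (show (0:ℝ) < 4*Lc by linarith), abs_of_neg hDneg]
      have hD' : (9/32:ℝ) ≤ -D := by linarith
      have hm := mul_le_mul (le_of_lt Llo) hD' (by norm_num) Lpos.le
      nlinarith [hm]
    calc |B x| / |4*Lc*D| ≤ 150 / (3/4) :=
          div_le_div₀ (by norm_num) hBabs (by norm_num) habsden
      _ = 200 := by norm_num

lemma half_pow (n : ℕ) : (2:ℝ)^(-(n:ℤ)) = (1/2)^n := by
  rw [zpow_neg, zpow_natCast, one_div, inv_pow]

lemma choose_ge (m : ℕ) : m ≤ (m+1).choose 2 := by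
  have h : (m+1).choose 2 = m.choose 1 + m.choose 2 := rfl
  rw [Nat.choose_one_right] at h
  omega

lemma choose_ge' (n : ℕ) : n + 55 ≤ (n+10+1).choose 2 := by
  have h : (n+10+1).choose 2 = (n+10).choose 1 + (n+10).choose 2 := rfl
  rw [Nat.choose_one_right] at h
  have h2 : Nat.choose 10 2 ≤ (n+10).choose 2 := Nat.choose_le_choose 2 (by omega)
  have h3 : Nat.choose 10 2 = 45 := rfl
  omega

lemma key (m : ℕ) : |aCoef m * b m| ≤ 800 * (2:ℝ)^(-((m+1).choose 2 : ℤ)) := by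
  have hz : (0:ℝ) < (2:ℝ)^(-((m+1).choose 2 : ℤ)) := by positivity
  rw [abs_mul, aCoef, abs_div, abs_mul, abs_pow, abs_neg, abs_one, one_pow, one_mul,
    abs_of_pos hz, abs_of_pos (Qpos m)]
  have h1 : (2:ℝ)^(-((m+1).choose 2:ℤ)) / Q m ≤ 4 * (2:ℝ)^(-((m+1).choose 2:ℤ)) := by
    rw [div_le_iff₀ (Qpos m)]
    nlinarith [Qquarter m, hz]
  calc (2:ℝ)^(-((m+1).choose 2:ℤ)) / Q m * |b m|
      ≤ (4 * (2:ℝ)^(-((m+1).choose 2:ℤ))) * 200 :=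
        mul_le_mul h1 (b_bound m) (abs_nonneg _) (by positivity)
    _ = 800 * (2:ℝ)^(-((m+1).choose 2:ℤ)) := by ring

lemma hsummable : Summable (fun m : ℕ => aCoef m * b m) := by
  apply Summable.of_norm_bounded (g := fun m => 800 * (1/2:ℝ)^m)
    ((summable_geometric_of_lt_one (by norm_num) (by norm_num)).mul_left 800)
  intro m
  rw [Real.norm_eq_abs]
  refine (key m).trans ?_
  have h : (2:ℝ)^(-((m+1).choose 2:ℤ)) ≤ (2:ℝ)^(-(m:ℤ)) := by
    apply zpow_le_zpow_right₀ one_le_two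
    have := choose_ge m
    omega
  rw [half_pow m] at h
  linarith

lemma tail_bound : |∑' n : ℕ, (aCoef (n+10) * b (n+10))| ≤ 1600/2^55 := by
  have hgeo : Summable (fun n : ℕ => (800/2^55:ℝ) * (1/2)^n) :=
    (summable_geometric_of_lt_one (by norm_num) (by norm_num)).mul_left _
  have hb : ∀ n : ℕ, ‖aCoef (n+10) * b (n+10)‖ ≤ (800/2^55:ℝ) * (1/2)^n := by
    intro n
    rw [Real.norm_eq_abs]
    refine (key (n+10)).trans ?_
    have h : (2:ℝ)^(-((n+10+1).choose 2:ℤ)) ≤ (2:ℝ)^(-((n:ℤ)+55)) := by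
      apply zpow_le_zpow_right₀ one_le_two
      have := choose_ge' n
      omega
    have h2 : (2:ℝ)^(-((n:ℤ)+55)) = (1/2^55) * (1/2)^n := by
      rw [show (-((n:ℤ)+55)) = (-55) + (-(n:ℤ)) by ring, zpow_add₀ (two_ne_zero), half_pow]
      norm_num
    rw [h2] at h
    linarith
  have hsn : Summable (fun n : ℕ => ‖aCoef (n+10) * b (n+10)‖) :=
    Summable.of_nonneg_of_le (fun _ => norm_nonneg _) hb hgeo
  calc |∑' n : ℕ, (aCoef (n+10) * b (n+10))| ≤ ∑' n : ℕ, ‖aCoef (n+10) * b (n+10)‖ :=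
        norm_tsum_le_tsum_norm hsn
    _ ≤ ∑' n : ℕ, (800/2^55:ℝ) * (1/2)^n := Summable.tsum_le_tsum hb hsn hgeo
    _ = (800/2^55:ℝ) * (1-1/2)⁻¹ := by
        rw [tsum_mul_left, tsum_geometric_of_lt_one (by norm_num) (by norm_num)]
    _ ≤ 1600/2^55 := by norm_num

lemma Qrange (n : ℕ) : ∏ k ∈ Finset.range n, (1 - (2:ℝ)^(-((k:ℤ)+1))) = Q n := by
  induction n with
  | zero => simp [Q, show Finset.Icc 1 0 = ∅ from rfl]
  | succ n ih =>
      rw [Finset.prod_range_succ, ih, Qsucc]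

lemma fpos (n : ℕ) : (0:ℝ) < 1 - (2:ℝ)^(-((n:ℤ)+1)) := by
  have h := factor_lb (n+1) (by omega)
  have hc : ((n+1:ℕ):ℤ) = (n:ℤ)+1 := by push_cast; ring
  rw [hc] at h
  linarith

lemma log_summable : Summable (fun n : ℕ => Real.log (1 - (2:ℝ)^(-((n:ℤ)+1)))) := by
  apply Summable.of_norm_bounded (g := fun n => (1/2:ℝ)^n)
    (summable_geometric_of_lt_one (by norm_num) (by norm_num))
  intro n
  set y : ℝ := (2:ℝ)^(-((n:ℤ)+1)) with hy
  have hy0 : 0 < y := by positivity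
  have hyeq : y = (1/2)^n / 2 := by
    rw [hy, show (-((n:ℤ)+1)) = (-(n:ℤ)) + (-1) by ring, zpow_add₀ (two_ne_zero), half_pow,
      show ((2:ℝ)^(-1:ℤ)) = 1/2 by norm_num]
    ring
  have hf : (0:ℝ) < 1 - y := fpos n
  have hf2 : (1/2:ℝ) ≤ 1 - y := by
    have h := factor_lb (n+1) (by omega)
    have hc : ((n+1:ℕ):ℤ) = (n:ℤ)+1 := by push_cast; ring
    rw [hc] at h
    exact h
  have hl : Real.log (1-y) ≤ 0 := Real.log_nonpos (by linarith) (by linarith)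
  rw [Real.norm_eq_abs, abs_of_nonpos hl]
  have h3 : Real.log (1-y)⁻¹ ≤ (1-y)⁻¹ - 1 := Real.log_le_sub_one_of_pos (by positivity)
  rw [Real.log_inv] at h3
  have hinv : (1-y) * (1-y)⁻¹ = 1 := mul_inv_cancel₀ (ne_of_gt hf)
  have hinvle : (1-y)⁻¹ ≤ 2 := by
    nlinarith [inv_nonneg.mpr hf.le]
  have hpn : (0:ℝ) < (1/2:ℝ)^n := by positivity
  nlinarith [h3, hinv, hyeq, mul_le_mul_of_nonneg_left hinvle hy0.le]

lemma multipliable : Multipliable (fun n : ℕ => 1 - (2:ℝ)^(-((n:ℤ)+1))) :=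
  Real.multipliable_of_summable_log (fun n => fpos n) log_summable

lemma Qtail : ∀ n : ℕ, 25 ≤ n →
    Q 25 * (1 - 1/33554432 + (2:ℝ)^(-(n:ℤ))) ≤ Q n ∧ Q n ≤ Q 25 := by
  intro n hn
  induction n, hn using Nat.le_induction with
  | base =>
      constructor
      · push_cast
        norm_num
      · exact le_refl _
  | succ n hn ih =>
      have hcast : ((n+1:ℕ):ℤ) = (n:ℤ)+1 := by push_cast; ring
      rw [Qsucc n, hcast]
      set s : ℝ := (2:ℝ)^(-((n:ℤ)+1)) with hs
      have hs0 : 0 < s := by positivity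
      have hdb : (2:ℝ)^(-(n:ℤ)) = 2 * s := by
        rw [hs, show (-(n:ℤ)) = 1 + (-((n:ℤ)+1)) by ring, zpow_add₀ (two_ne_zero)]
        norm_num
      have h25 : ((2:ℝ)^(-(25:ℤ))) = 1/33554432 := by norm_num
      have hsm : 2*s ≤ (1:ℝ)/33554432 := by
        rw [← h25, ← hdb]
        exact zpow_le_zpow_right₀ one_le_two (by omega)
      have hQ25 : 0 < Q 25 := Qpos 25
      have hQn : 0 < Q n := Qpos n
      clear_value s
      rw [hdb] at ih
      constructor
      · nlinarith [ih.1, hQ25, hs0, hsm,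
          mul_le_mul_of_nonneg_right ih.1 (show (0:ℝ) ≤ 1 - s by linarith),
          mul_nonneg (mul_nonneg hQ25.le hs0.le) (sub_nonneg.mpr hsm)]
      · nlinarith [ih.2, hQn, hs0, mul_pos hQn hs0]

lemma Qinf_bounds : Q 25 * (1 - 1/33554432) ≤ Qinf ∧ Qinf ≤ Q 25 := by
  have hp : HasProd (fun n : ℕ => 1 - (2:ℝ)^(-((n:ℤ)+1))) Qinf := multipliable.hasProd
  have ht : Filter.Tendsto (fun n => Q n) Filter.atTop (nhds Qinf) := by
    have h := hp.tendsto_prod_nat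
    simpa only [Qrange] using h
  constructor
  · apply ge_of_tendsto ht
    filter_upwards [Filter.eventually_ge_atTop 25] with n hn
    have h := (Qtail n hn).1
    have hpos : (0:ℝ) < (2:ℝ)^(-(n:ℤ)) := by positivity
    nlinarith [Qpos 25]
  · apply le_of_tendsto ht
    filter_upwards [Filter.eventually_ge_atTop 25] with n hn
    exact (Qtail n hn).2
lemma hfin : ∑ i ∈ Finset.range 10, (aCoef i * b i) =
    (-497043880243726479598141769364581333229676:ℝ)/498957677705775712442205590427242466084375
    + ((265948677417080485203181046894809:ℝ)/353675128933932619647792033652500)/Real.log 2 := by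
  have hL0 : (0:ℝ) < Real.log 2 := Real.log_pos (by norm_num)
  rw [Finset.sum_range_succ, Finset.sum_range_succ, Finset.sum_range_succ, Finset.sum_range_succ,
    Finset.sum_range_succ, Finset.sum_range_succ, Finset.sum_range_succ, Finset.sum_range_succ,
    Finset.sum_range_succ, Finset.sum_range_one,
    term0, term1, term2, term3, term4, term5, term6, term7, term8, term9]
  field_simp
  ring

lemma dst_constant_bounds_aux :
    0.30707 < (1 / Qinf) * ∑' m : ℕ, aCoef m * b m ∧
      (1 / Qinf) * ∑' m : ℕ, aCoef m * b m < 0.30708 := by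
  have hLlo : (0.6931471803:ℝ) < Real.log 2 := Real.log_two_gt_d9
  have hLhi : Real.log 2 < 0.6931471808 := Real.log_two_lt_d9
  have hL0 : (0:ℝ) < Real.log 2 := by linarith
  have hC : (0:ℝ) < (265948677417080485203181046894809:ℝ)/353675128933932619647792033652500 := by
    norm_num
  have hPlo : (0.0886809941:ℝ) ≤ ∑ i ∈ Finset.range 10, (aCoef i * b i) := by
    have h1 : (265948677417080485203181046894809:ℝ)/353675128933932619647792033652500 / 0.6931471808
        ≤ (265948677417080485203181046894809:ℝ)/353675128933932619647792033652500 / Real.log 2 :=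
      div_le_div_of_nonneg_left hC.le hL0 (by linarith)
    rw [hfin]
    have h2 : (0.0886809941:ℝ) ≤
        (-497043880243726479598141769364581333229676:ℝ)/498957677705775712442205590427242466084375
        + (265948677417080485203181046894809:ℝ)/353675128933932619647792033652500 / 0.6931471808 := by
      norm_num
    linarith
  have hPhi : ∑ i ∈ Finset.range 10, (aCoef i * b i) ≤ 0.088680994913 := by
    have h1 : (265948677417080485203181046894809:ℝ)/353675128933932619647792033652500 / Real.log 2
        ≤ (265948677417080485203181046894809:ℝ)/353675128933932619647792033652500 / 0.6931471803 :=
      div_le_div_of_nonneg_left hC.le (by norm_num) hLlo.le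
    rw [hfin]
    have h2 : (-497043880243726479598141769364581333229676:ℝ)/498957677705775712442205590427242466084375
        + (265948677417080485203181046894809:ℝ)/353675128933932619647792033652500 / 0.6931471803
        ≤ 0.088680994913 := by
      norm_num
    linarith
  have hsplit := (Summable.sum_add_tsum_nat_add (f := fun m : ℕ => aCoef m * b m) 10 hsummable)
  have htail := abs_le.mp tail_bound
  have hq25 := Q25_bounds
  have hql := Qinf_bounds.1
  have hqh := Qinf_bounds.2
  have hQlo : (0.2887880949:ℝ) ≤ Qinf := by nlinarith [hq25.1, hql]
  have hQhi : Qinf ≤ 0.2887881037 := le_trans hqh hq25.2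
  have hQpos : (0:ℝ) < Qinf := lt_of_lt_of_le (by norm_num) hQlo
  have heps : (1600:ℝ)/2^55 ≤ 0.0000000000001 := by norm_num
  have hSlo : (0.088680994:ℝ) ≤ ∑' m : ℕ, aCoef m * b m := by
    rw [← hsplit]
    linarith [htail.1]
  have hShi : ∑' m : ℕ, aCoef m * b m ≤ 0.0886809949131 := by
    rw [← hsplit]
    linarith [htail.2]
  constructor
  · rw [one_div_mul_eq_div, lt_div_iff₀ hQpos]
    nlinarith [hSlo, hQhi]
  · rw [one_div_mul_eq_div, div_lt_iff₀ hQpos]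
    nlinarith [hShi, hQlo]

/-- The asymptotic proportion of 2-protected nodes in random digital search trees,
`c = (1/Q_∞) ∑_{m≥0} a_{m+1} b_m`, satisfies `0.30707 < c < 0.30708`. -/
theorem dst_constant_bounds :
    0.30707 < (1 / Qinf) * ∑' m : ℕ, aCoef m * b m ∧
      (1 / Qinf) * ∑' m : ℕ, aCoef m * b m < 0.30708 := by
  exact dst_constant_bounds_aux
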